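/- If A and B are positive semidefinite n×n complex matrices and X is any n×n complex matrix, then for every j: s_j(A^{1/2} X B^{1/2}) ≤ ‖X‖ · s_j(A ⊕ B). -/

import Mathlib

open Matrix
open scoped ComplexOrder

/-- The `j`-th largest singular value of a square complex matrix (`j : Fin m`, zero-indexed,
so `sv A 0` is the largest singular value). It is defined as the square root of the `j`-th
largest eigenvalue of `Aᴴ * A`. -/
noncomputable def sv {m : ℕ} (A : Matrix (Fin m) (Fin m) ℂ) (j : Fin m) : ℝ :=
  Real.sqrt ((Matrix.isHermitian_conjTranspose_mul_self A).eigenvalues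
    (Tuple.sort ((Matrix.isHermitian_conjTranspose_mul_self A).eigenvalues) j.rev))

/-- The absolute value `|A| = (Aᴴ A)^{1/2}` of a square complex matrix. -/
noncomputable def matAbs {m : ℕ} (A : Matrix (Fin m) (Fin m) ℂ) : Matrix (Fin m) (Fin m) ℂ :=
  (Matrix.posSemidef_conjTranspose_mul_self A).1.cfc Real.sqrt

/-- The `2n × 2n` block matrix `[[A, B], [C, D]]`, reindexed by `Fin (n + n)`. -/
noncomputable def blk {n : ℕ} (A B C D : Matrix (Fin n) (Fin n) ℂ) :
    Matrix (Fin (n + n)) (Fin (n + n)) ℂ :=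
  Matrix.reindex finSumFinEquiv finSumFinEquiv (Matrix.fromBlocks A B C D)

/-- `f(P)` for a Hermitian matrix `P`, via the spectral functional calculus. -/
noncomputable def herCfc {m : ℕ} {P : Matrix (Fin m) (Fin m) ℂ} (hP : P.IsHermitian)
    (f : ℝ → ℝ) : Matrix (Fin m) (Fin m) ℂ :=
  hP.cfc f

/-- `|A| ^ r` (real power of the absolute value), via the functional calculus. -/
noncomputable def matAbsPow {m : ℕ} (A : Matrix (Fin m) (Fin m) ℂ) (r : ℝ) :
    Matrix (Fin m) (Fin m) ℂ :=
  herCfc (Matrix.isHermitian_iff_isSelfAdjoint.mpr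
    ((Matrix.posSemidef_conjTranspose_mul_self A).1.cfc_eq Real.sqrt ▸ cfc_predicate Real.sqrt (Aᴴ * A))) (fun t => t ^ r)

/-- `f(|A|)`, via the functional calculus. -/
noncomputable def matAbsCfc {m : ℕ} (A : Matrix (Fin m) (Fin m) ℂ) (f : ℝ → ℝ) :
    Matrix (Fin m) (Fin m) ℂ :=
  herCfc (Matrix.isHermitian_iff_isSelfAdjoint.mpr
    ((Matrix.posSemidef_conjTranspose_mul_self A).1.cfc_eq Real.sqrt ▸ cfc_predicate Real.sqrt (Aᴴ * A))) f

/-- The operator norm: the largest singular value. -/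
noncomputable def opNorm {m : ℕ} (A : Matrix (Fin m) (Fin m) ℂ) : ℝ :=
  ⨆ j, sv A j


open Finset Module
open scoped InnerProductSpace

namespace SVAux


variable {m : ℕ}

abbrev Es (m : ℕ) := EuclideanSpace ℂ (Fin m)

/-- descending eigenvalues -/
noncomputable def dE {H : Matrix (Fin m) (Fin m) ℂ} (hH : H.IsHermitian) (j : Fin m) : ℝ :=
  hH.eigenvalues (Tuple.sort hH.eigenvalues j.rev)

lemma dE_congr {H N : Matrix (Fin m) (Fin m) ℂ} (hH : H.IsHermitian) (hN : N.IsHermitian)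
    (h : H = N) (j : Fin m) : dE hH j = dE hN j := by subst h; rfl

lemma dE_antitone {H : Matrix (Fin m) (Fin m) ℂ} (hH : H.IsHermitian) :
    Antitone (dE hH) := by
  intro a b hab
  have := Tuple.monotone_sort hH.eigenvalues (Fin.rev_le_rev.mpr hab)
  simpa [dE, Function.comp] using this

lemma card_filter_dE {H : Matrix (Fin m) (Fin m) ℂ} (hH : H.IsHermitian) (p : ℝ → Prop)
    [DecidablePred p] :
    (univ.filter fun l => p (dE hH l)).card = (univ.filter fun l => p (hH.eigenvalues l)).card := by
  let e : Fin m ≃ Fin m := Fin.revPerm.trans (Tuple.sort hH.eigenvalues)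
  refine Finset.card_bij (fun a _ => e a) (fun a ha => ?_) (fun a ha b hb hab => ?_) ?_
  · simp only [mem_filter, mem_univ, true_and] at ha ⊢
    exact ha
  · exact e.injective hab
  · intro b hb
    refine ⟨e.symm b, ?_, by simp⟩
    simp only [mem_filter, mem_univ, true_and] at hb ⊢
    simpa [dE, e] using hb

/-- If an antitone function has at most `j` values exceeding `t`, then `f j ≤ t`. -/
lemma antitone_le_of_card {f : Fin m → ℝ} (hf : Antitone f) {t : ℝ} (j : Fin m)
    (h : (univ.filter fun l => t < f l).card ≤ (j : ℕ)) : f j ≤ t := by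
  by_contra hc
  push_neg at hc
  have hsub : Finset.Iic j ⊆ univ.filter fun l => t < f l := by
    intro l hl
    simp only [mem_Iic] at hl
    simp only [mem_filter, mem_univ, true_and]
    exact lt_of_lt_of_le hc (hf hl)
  have := Finset.card_le_card hsub
  rw [Fin.card_Iic] at this
  omega

/-- Conversely the number of values `≥ f j` is at least `j+1`. -/
lemma card_ge_of_antitone {f : Fin m → ℝ} (hf : Antitone f) (j : Fin m) :
    (j : ℕ) + 1 ≤ (univ.filter fun l => f j ≤ f l).card := by
  have hsub : Finset.Iic j ⊆ univ.filter fun l => f j ≤ f l := by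
    intro l hl
    simp only [mem_Iic] at hl
    simp only [mem_filter, mem_univ, true_and]
    exact hf hl
  have := Finset.card_le_card hsub
  rwa [Fin.card_Iic] at this



noncomputable def L (M : Matrix (Fin m) (Fin m) ℂ) : Es m →ₗ[ℂ] Es m :=
  Matrix.toEuclideanLin M

lemma L_mul (M N : Matrix (Fin m) (Fin m) ℂ) : L (M * N) = (L M).comp (L N) := by
  ext x
  simp [L, Matrix.toEuclideanLin_apply, Matrix.mulVec_mulVec]

lemma L_eigen {H : Matrix (Fin m) (Fin m) ℂ} (hH : H.IsHermitian) (l : Fin m) :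
    L H (hH.eigenvectorBasis l) = (hH.eigenvalues l : ℂ) • hH.eigenvectorBasis l := by
  have h := hH.mulVec_eigenvectorBasis l
  ext i
  have := congrFun h i
  simpa [L, Matrix.toEuclideanLin_apply] using this

lemma inner_L_conjTranspose_mul_self (T : Matrix (Fin m) (Fin m) ℂ) (x : Es m) :
    RCLike.re (⟪x, L (Tᴴ * T) x⟫_ℂ) = ‖L T x‖ ^ 2 := by
  rw [L_mul]
  have : L Tᴴ = LinearMap.adjoint (L T) := Matrix.toEuclideanLin_conjTranspose_eq_adjoint T
  rw [LinearMap.comp_apply, this, LinearMap.adjoint_inner_right]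
  rw [inner_self_eq_norm_sq (𝕜 := ℂ)]



variable {ι : Type*} [Fintype ι] {v : ι → Es m} {H : Matrix (Fin m) (Fin m) ℂ}
  {lam : ι → ℝ}

lemma norm_sq_sum (hv : Orthonormal ℂ v) (c : ι → ℂ) :
    ‖∑ w, c w • v w‖ ^ 2 = ∑ w, ‖c w‖ ^ 2 := by
  have h := hv.inner_sum c c univ
  have h2 : RCLike.re (⟪∑ w, c w • v w, ∑ w, c w • v w⟫_ℂ) = ‖∑ w, c w • v w‖ ^ 2 :=
    inner_self_eq_norm_sq _
  rw [h] at h2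
  rw [← h2, map_sum]
  congr 1; ext w
  rw [mul_comm, Complex.mul_conj']
  simp [← Complex.ofReal_pow]

lemma L_sum_eigen (hev : ∀ w, L H (v w) = (lam w : ℂ) • v w) (c : ι → ℂ) :
    L H (∑ w, c w • v w) = ∑ w, (c w * lam w) • v w := by
  rw [map_sum]
  congr 1; ext w
  rw [LinearMap.map_smul, hev w, smul_smul]

lemma norm_L_sum_sq (hv : Orthonormal ℂ v) (hev : ∀ w, L H (v w) = (lam w : ℂ) • v w)
    (c : ι → ℂ) :
    ‖L H (∑ w, c w • v w)‖ ^ 2 = ∑ w, (lam w) ^ 2 * ‖c w‖ ^ 2 := by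
  rw [L_sum_eigen hev, norm_sq_sum hv]
  congr 1; ext w
  simp [mul_pow, mul_comm]

/-- Strict lower bound for the action on a span of eigenvectors. -/
lemma lt_norm_L_of_mem_span (hv : Orthonormal ℂ v)
    (hev : ∀ w, L H (v w) = (lam w : ℂ) • v w) {t : ℝ} (ht : 0 ≤ t)
    (hlam : ∀ w, t < lam w) {x : Es m}
    (hx : x ∈ Submodule.span ℂ (Set.range v)) (hx0 : x ≠ 0) :
    t * ‖x‖ < ‖L H x‖ := by
  rw [Submodule.mem_span_range_iff_exists_fun] at hx
  obtain ⟨c, rfl⟩ := hx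
  have hxn : ‖∑ w, c w • v w‖ ^ 2 = ∑ w, ‖c w‖ ^ 2 := norm_sq_sum hv c
  have hLn := norm_L_sum_sq hv hev c
  have hex : ∃ w, c w ≠ 0 := by
    by_contra hall
    push_neg at hall
    exact hx0 (by simp [hall])
  obtain ⟨w0, hw0⟩ := hex
  have hsq : (t * ‖∑ w, c w • v w‖) ^ 2 < ‖L H (∑ w, c w • v w)‖ ^ 2 := by
    rw [mul_pow, hxn, hLn, Finset.mul_sum]
    apply Finset.sum_lt_sum
    · intro w _
      exact mul_le_mul_of_nonneg_right
        (pow_le_pow_left₀ ht (hlam w).le 2) (sq_nonneg _)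
    · refine ⟨w0, Finset.mem_univ _, ?_⟩
      have hc : 0 < ‖c w0‖ ^ 2 := pow_pos (norm_pos_iff.mpr hw0) 2
      exact mul_lt_mul_of_pos_right (pow_lt_pow_left₀ (hlam w0) ht (by norm_num)) hc
  exact lt_of_pow_lt_pow_left₀ 2 (norm_nonneg _) hsq

/-- Rayleigh-quotient bounds on a span of eigenvectors. -/
lemma inner_L_sum (hv : Orthonormal ℂ v) (hev : ∀ w, L H (v w) = (lam w : ℂ) • v w)
    (c : ι → ℂ) :
    RCLike.re (⟪∑ w, c w • v w, L H (∑ w, c w • v w)⟫_ℂ) = ∑ w, lam w * ‖c w‖ ^ 2 := by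
  rw [L_sum_eigen hev, hv.inner_sum]
  rw [map_sum]
  congr 1; ext w
  have : (starRingEnd ℂ) (c w) * (c w * (lam w : ℂ)) = (lam w : ℂ) * ((starRingEnd ℂ) (c w) * c w) := by ring
  rw [this, mul_comm ((starRingEnd ℂ) (c w)) (c w), Complex.mul_conj']
  simp [← Complex.ofReal_pow]

lemma inner_L_le_of_mem_span (hv : Orthonormal ℂ v)
    (hev : ∀ w, L H (v w) = (lam w : ℂ) • v w) {t : ℝ}
    (hlam : ∀ w, lam w ≤ t) {x : Es m}
    (hx : x ∈ Submodule.span ℂ (Set.range v)) :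
    RCLike.re (⟪x, L H x⟫_ℂ) ≤ t * ‖x‖ ^ 2 := by
  rw [Submodule.mem_span_range_iff_exists_fun] at hx
  obtain ⟨c, rfl⟩ := hx
  rw [inner_L_sum hv hev, norm_sq_sum hv, Finset.mul_sum]
  apply Finset.sum_le_sum
  intro w _
  have := sq_nonneg (‖c w‖)
  nlinarith [hlam w]

lemma le_inner_L_of_mem_span (hv : Orthonormal ℂ v)
    (hev : ∀ w, L H (v w) = (lam w : ℂ) • v w) {t : ℝ}
    (hlam : ∀ w, t ≤ lam w) {x : Es m}
    (hx : x ∈ Submodule.span ℂ (Set.range v)) :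
    t * ‖x‖ ^ 2 ≤ RCLike.re (⟪x, L H x⟫_ℂ) := by
  rw [Submodule.mem_span_range_iff_exists_fun] at hx
  obtain ⟨c, rfl⟩ := hx
  rw [inner_L_sum hv hev, norm_sq_sum hv, Finset.mul_sum]
  apply Finset.sum_le_sum
  intro w _
  have := sq_nonneg (‖c w‖)
  nlinarith [hlam w]


lemma sv_eq (T : Matrix (Fin m) (Fin m) ℂ) (j : Fin m) :
    sv T j = Real.sqrt (dE (Matrix.isHermitian_conjTranspose_mul_self T) j) := rfl

lemma sv_nonneg' (T : Matrix (Fin m) (Fin m) ℂ) (j : Fin m) : 0 ≤ sv T j :=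
  Real.sqrt_nonneg _

lemma dE_nonneg (T : Matrix (Fin m) (Fin m) ℂ) (j : Fin m) :
    0 ≤ dE (Matrix.isHermitian_conjTranspose_mul_self T) j :=
  (Matrix.posSemidef_conjTranspose_mul_self T).eigenvalues_nonneg _

lemma sv_sq (T : Matrix (Fin m) (Fin m) ℂ) (j : Fin m) :
    sv T j ^ 2 = dE (Matrix.isHermitian_conjTranspose_mul_self T) j :=
  Real.sq_sqrt (dE_nonneg T j)

lemma card_lt_of_antitone {f : Fin m → ℝ} (hf : Antitone f) (j : Fin m) :
    (univ.filter fun l => f j < f l).card ≤ (j : ℕ) := by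
  have hsub : (univ.filter fun l => f j < f l) ⊆ Finset.Iio j := by
    intro l hl
    simp only [mem_filter, mem_univ, true_and] at hl
    rw [Finset.mem_Iio]
    by_contra h
    push_neg at h
    exact absurd (hf h) (not_le.mpr hl)
  have := Finset.card_le_card hsub
  rwa [Fin.card_Iio] at this

lemma exists_good_subspace (T : Matrix (Fin m) (Fin m) ℂ) (j : Fin m) :
    ∃ V : Submodule ℂ (Es m), m ≤ finrank ℂ V + (j : ℕ) ∧
      ∀ x ∈ V, ‖L T x‖ ≤ sv T j * ‖x‖ := by
  classical
  set hH := Matrix.isHermitian_conjTranspose_mul_self T with hHdef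
  set b := hH.eigenvectorBasis with hbdef
  set S : Finset (Fin m) := univ.filter (fun l => ¬ dE hH j < hH.eigenvalues l) with hSdef
  set v : {l // l ∈ S} → Es m := fun l => b l.1 with hvdef
  have hv : Orthonormal ℂ v := b.orthonormal.comp _ Subtype.val_injective
  refine ⟨Submodule.span ℂ (Set.range v), ?_, ?_⟩
  · rw [finrank_span_eq_card hv.linearIndependent, Fintype.card_coe]
    have hcompl : (univ.filter fun l => dE hH j < hH.eigenvalues l).card ≤ (j : ℕ) := by
      rw [← card_filter_dE hH (fun r => dE hH j < r)]
      exact card_lt_of_antitone (dE_antitone hH) j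
    have hsplit := Finset.card_filter_add_card_filter_not
      (s := (univ : Finset (Fin m))) (p := fun l => dE hH j < hH.eigenvalues l)
    rw [Finset.card_univ, Fintype.card_fin] at hsplit
    rw [hSdef]
    omega
  · intro x hx
    have hb1 : ∀ w : {l // l ∈ S}, L (Tᴴ * T) (v w) = ((hH.eigenvalues w.1 : ℝ) : ℂ) • v w :=
      fun w => L_eigen hH w.1
    have hlam : ∀ w : {l // l ∈ S}, hH.eigenvalues w.1 ≤ dE hH j := by
      intro w
      have := w.2
      simp only [hSdef, mem_filter, mem_univ, true_and] at this
      exact not_lt.mp this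
    have hray := inner_L_le_of_mem_span hv hb1 hlam hx
    rw [inner_L_conjTranspose_mul_self] at hray
    have hsq : ‖L T x‖ ^ 2 ≤ (sv T j * ‖x‖) ^ 2 := by
      rw [mul_pow, sv_sq]
      exact hray
    have h0 : 0 ≤ sv T j * ‖x‖ := mul_nonneg (sv_nonneg' T j) (norm_nonneg x)
    exact (pow_le_pow_iff_left₀ (norm_nonneg _) h0 (by norm_num)).mp hsq

lemma exists_ne_zero_inf (V W : Submodule ℂ (Es m)) (h : m < finrank ℂ V + finrank ℂ W) :
    ∃ x : Es m, x ∈ V ⊓ W ∧ x ≠ 0 := by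
  have hsum := Submodule.finrank_sup_add_finrank_inf_eq V W
  have hle : finrank ℂ ↥(V ⊔ W) ≤ m := by
    have := Submodule.finrank_le (V ⊔ W)
    rwa [finrank_euclideanSpace_fin] at this
  have hpos : 0 < finrank ℂ ↥(V ⊓ W) := by omega
  have : Nontrivial ↥(V ⊓ W) := Module.nontrivial_of_finrank_pos hpos
  obtain ⟨⟨x, hx⟩, hx0⟩ := exists_ne (0 : ↥(V ⊓ W))
  refine ⟨x, hx, ?_⟩
  simpa [Submodule.mk_eq_zero] using hx0

lemma exists_sv_le (T : Matrix (Fin m) (Fin m) ℂ) (j : Fin m) (W : Submodule ℂ (Es m))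
    (hW : m < finrank ℂ W + (j : ℕ) + 1) :
    ∃ x, x ∈ W ∧ x ≠ 0 ∧ sv T j * ‖x‖ ≤ ‖L T x‖ := by
  classical
  set hH := Matrix.isHermitian_conjTranspose_mul_self T with hHdef
  set b := hH.eigenvectorBasis with hbdef
  set S : Finset (Fin m) := univ.filter (fun l => dE hH j ≤ hH.eigenvalues l) with hSdef
  set v : {l // l ∈ S} → Es m := fun l => b l.1 with hvdef
  have hv : Orthonormal ℂ v := b.orthonormal.comp _ Subtype.val_injective
  have hcard : (j : ℕ) + 1 ≤ S.card := by
    rw [hSdef, ← card_filter_dE hH (fun r => dE hH j ≤ r)]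
    exact card_ge_of_antitone (dE_antitone hH) j
  have hrank : (j : ℕ) + 1 ≤ finrank ℂ (Submodule.span ℂ (Set.range v)) := by
    rw [finrank_span_eq_card hv.linearIndependent, Fintype.card_coe]
    exact hcard
  obtain ⟨x, hx, hx0⟩ := exists_ne_zero_inf (Submodule.span ℂ (Set.range v)) W (by omega)
  refine ⟨x, hx.2, hx0, ?_⟩
  have hb1 : ∀ w : {l // l ∈ S}, L (Tᴴ * T) (v w) = ((hH.eigenvalues w.1 : ℝ) : ℂ) • v w :=
    fun w => L_eigen hH w.1
  have hlam : ∀ w : {l // l ∈ S}, dE hH j ≤ hH.eigenvalues w.1 := by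
    intro w
    have := w.2
    simp only [hSdef, mem_filter, mem_univ, true_and] at this
    exact this
  have hray := le_inner_L_of_mem_span hv hb1 hlam hx.1
  rw [inner_L_conjTranspose_mul_self] at hray
  have hsq : (sv T j * ‖x‖) ^ 2 ≤ ‖L T x‖ ^ 2 := by
    rw [mul_pow, sv_sq]
    exact hray
  have h0 : 0 ≤ sv T j * ‖x‖ := mul_nonneg (sv_nonneg' T j) (norm_nonneg x)
  exact (pow_le_pow_iff_left₀ h0 (norm_nonneg _) (by norm_num)).mp hsq

lemma finrank_le_of_sv_lt (T : Matrix (Fin m) (Fin m) ℂ) (j : Fin m) (W : Submodule ℂ (Es m))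
    (h : ∀ x ∈ W, x ≠ 0 → sv T j * ‖x‖ < ‖L T x‖) : finrank ℂ W ≤ (j : ℕ) := by
  by_contra hc
  push_neg at hc
  obtain ⟨V, hV, hVb⟩ := exists_good_subspace T j
  obtain ⟨x, hx, hx0⟩ := exists_ne_zero_inf V W (by omega)
  exact absurd (hVb x hx.1) (not_le.mpr (h x hx.2 hx0))

lemma finrank_le_comap (f : Es m →ₗ[ℂ] Es m) (V : Submodule ℂ (Es m)) :
    finrank ℂ V ≤ finrank ℂ (V.comap f) := by
  have h1 : V.comap f = LinearMap.ker (V.mkQ ∘ₗ f) := by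
    ext x
    simp [LinearMap.mem_ker, Submodule.Quotient.mk_eq_zero]
  have h2 := LinearMap.finrank_range_add_finrank_ker (V.mkQ ∘ₗ f)
  have h3 : finrank ℂ (LinearMap.range (V.mkQ ∘ₗ f)) ≤ finrank ℂ (Es m ⧸ V) :=
    Submodule.finrank_le _
  have h4 := Submodule.finrank_quotient_add_finrank V
  rw [finrank_euclideanSpace_fin] at h2 h4
  rw [h1]
  omega

lemma horn3 (M X N : Matrix (Fin m) (Fin m) ℂ) (i k j : Fin m) (hik : (i:ℕ) + (k:ℕ) = (j:ℕ))
    (C : ℝ) (hC0 : 0 ≤ C) (hC : ∀ x : Es m, ‖L X x‖ ≤ C * ‖x‖) :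
    sv (M * X * N) j ≤ sv M i * C * sv N k := by
  obtain ⟨VM, hVM, hVMb⟩ := exists_good_subspace M i
  obtain ⟨VN, hVN, hVNb⟩ := exists_good_subspace N k
  set U := VN ⊓ Submodule.comap (L (X * N)) VM with hU
  have hcom : finrank ℂ VM ≤ finrank ℂ (Submodule.comap (L (X * N)) VM) :=
    finrank_le_comap _ _
  have hsum := Submodule.finrank_sup_add_finrank_inf_eq VN (Submodule.comap (L (X * N)) VM)
  have hsup : finrank ℂ ↥(VN ⊔ Submodule.comap (L (X * N)) VM) ≤ m := by
    have := Submodule.finrank_le (VN ⊔ Submodule.comap (L (X * N)) VM)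
    rwa [finrank_euclideanSpace_fin] at this
  have hWrank : m < finrank ℂ ↥U + (j:ℕ) + 1 := by
    rw [hU]
    omega
  obtain ⟨x, hxU, hx0, hxle⟩ := exists_sv_le (M * X * N) j U hWrank
  have hxVN : x ∈ VN := hxU.1
  have hxVM : L (X * N) x ∈ VM := hxU.2
  have e1 : L (M * X * N) x = L M (L (X * N) x) := by
    rw [mul_assoc, L_mul]; rfl
  have e2 : L (X * N) x = L X (L N x) := by rw [L_mul]; rfl
  have chain : sv (M * X * N) j * ‖x‖ ≤ (sv M i * C * sv N k) * ‖x‖ := by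
    calc sv (M * X * N) j * ‖x‖ ≤ ‖L (M * X * N) x‖ := hxle
    _ = ‖L M (L (X * N) x)‖ := by rw [e1]
    _ ≤ sv M i * ‖L (X * N) x‖ := hVMb _ hxVM
    _ = sv M i * ‖L X (L N x)‖ := by rw [e2]
    _ ≤ sv M i * (C * ‖L N x‖) :=
        mul_le_mul_of_nonneg_left (hC _) (sv_nonneg' M i)
    _ ≤ sv M i * (C * (sv N k * ‖x‖)) :=
        mul_le_mul_of_nonneg_left
          (mul_le_mul_of_nonneg_left (hVNb x hxVN) hC0) (sv_nonneg' M i)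
    _ = (sv M i * C * sv N k) * ‖x‖ := by ring
  exact le_of_mul_le_mul_right chain (norm_pos_iff.mpr hx0)

lemma sv_le_opNorm (X : Matrix (Fin m) (Fin m) ℂ) (j : Fin m) : sv X j ≤ opNorm X :=
  le_ciSup (Set.finite_range _).bddAbove j

lemma L_le_opNorm (X : Matrix (Fin m) (Fin m) ℂ) (hm : 0 < m) (x : Es m) :
    ‖L X x‖ ≤ opNorm X * ‖x‖ := by
  obtain ⟨V, hV, hVb⟩ := exists_good_subspace X ⟨0, hm⟩
  have hVtop : V = ⊤ := by
    apply Submodule.eq_top_of_finrank_eq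
    have h1 := Submodule.finrank_le V
    rw [finrank_euclideanSpace_fin] at h1
    rw [finrank_euclideanSpace_fin]
    simp only [Fin.val_mk, Nat.add_zero] at hV
    omega
  calc ‖L X x‖ ≤ sv X ⟨0, hm⟩ * ‖x‖ := hVb x (hVtop ▸ Submodule.mem_top)
  _ ≤ opNorm X * ‖x‖ := mul_le_mul_of_nonneg_right (sv_le_opNorm X _) (norm_nonneg _)

lemma opNorm_nonneg (X : Matrix (Fin m) (Fin m) ℂ) (hm : 0 < m) : 0 ≤ opNorm X :=
  le_trans (sv_nonneg' X ⟨0, hm⟩) (sv_le_opNorm X ⟨0, hm⟩)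

section Block

variable {n : ℕ}

noncomputable def j1 (u : Es n) : Es (n+n) :=
  WithLp.toLp 2 (fun w => Sum.elim u.ofLp 0 (finSumFinEquiv.symm w))

noncomputable def j2 (u : Es n) : Es (n+n) :=
  WithLp.toLp 2 (fun w => Sum.elim 0 u.ofLp (finSumFinEquiv.symm w))

lemma j1_smul (c : ℂ) (u : Es n) : j1 (c • u) = c • j1 u := by
  ext w
  show Sum.elim (c • u).ofLp (0 : Fin n → ℂ) (finSumFinEquiv.symm w) = c • Sum.elim u.ofLp (0 : Fin n → ℂ) (finSumFinEquiv.symm w)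
  rcases finSumFinEquiv.symm w with a | a <;>
    simp [PiLp.smul_apply, smul_eq_mul]

lemma j2_smul (c : ℂ) (u : Es n) : j2 (c • u) = c • j2 u := by
  ext w
  show Sum.elim (0 : Fin n → ℂ) (c • u).ofLp (finSumFinEquiv.symm w) = c • Sum.elim (0 : Fin n → ℂ) u.ofLp (finSumFinEquiv.symm w)
  rcases finSumFinEquiv.symm w with a | a <;>
    simp [PiLp.smul_apply, smul_eq_mul]

lemma symm_addNat (x : Fin n) :
    (finSumFinEquiv (m := n) (n := n)).symm (x.addNat n) = Sum.inr x := by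
  rw [show x.addNat n = Fin.natAdd n x by ext; simp [Fin.natAdd, Fin.addNat, add_comm]]
  exact finSumFinEquiv_symm_apply_natAdd x

lemma inner_j1_j1 (u v : Es n) : ⟪j1 u, j1 v⟫_ℂ = ⟪u, v⟫_ℂ := by
  simp only [PiLp.inner_apply, RCLike.inner_apply]
  rw [← Equiv.sum_comp (finSumFinEquiv (m := n) (n := n))]
  rw [Fintype.sum_sum_type]
  simp [j1, finSumFinEquiv_apply_left, finSumFinEquiv_apply_right,
    finSumFinEquiv_symm_apply_castAdd, finSumFinEquiv_symm_apply_natAdd, symm_addNat]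

lemma inner_j2_j2 (u v : Es n) : ⟪j2 u, j2 v⟫_ℂ = ⟪u, v⟫_ℂ := by
  simp only [PiLp.inner_apply, RCLike.inner_apply]
  rw [← Equiv.sum_comp (finSumFinEquiv (m := n) (n := n))]
  rw [Fintype.sum_sum_type]
  simp [j2, finSumFinEquiv_apply_left, finSumFinEquiv_apply_right,
    finSumFinEquiv_symm_apply_castAdd, finSumFinEquiv_symm_apply_natAdd, symm_addNat]

lemma inner_j1_j2 (u v : Es n) : ⟪j1 u, j2 v⟫_ℂ = 0 := by
  simp only [PiLp.inner_apply, RCLike.inner_apply]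
  rw [← Equiv.sum_comp (finSumFinEquiv (m := n) (n := n))]
  rw [Fintype.sum_sum_type]
  simp [j1, j2, finSumFinEquiv_apply_left, finSumFinEquiv_apply_right,
    finSumFinEquiv_symm_apply_castAdd, finSumFinEquiv_symm_apply_natAdd, symm_addNat]

lemma inner_j2_j1 (u v : Es n) : ⟪j2 u, j1 v⟫_ℂ = 0 := by
  simp only [PiLp.inner_apply, RCLike.inner_apply]
  rw [← Equiv.sum_comp (finSumFinEquiv (m := n) (n := n))]
  rw [Fintype.sum_sum_type]
  simp [j1, j2, finSumFinEquiv_apply_left, finSumFinEquiv_apply_right,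
    finSumFinEquiv_symm_apply_castAdd, finSumFinEquiv_symm_apply_natAdd, symm_addNat]

lemma blk_mulVec₁ (A B : Matrix (Fin n) (Fin n) ℂ) (u : Es n) :
    (blk A 0 0 B) *ᵥ (j1 u).ofLp = (j1 (WithLp.toLp 2 (A *ᵥ u.ofLp))).ofLp := by
  have h1 : (j1 u).ofLp ∘ (finSumFinEquiv (m := n) (n := n)) = Sum.elim u.ofLp 0 := by
    funext s
    show Sum.elim u.ofLp 0 (finSumFinEquiv.symm (finSumFinEquiv s)) = Sum.elim u.ofLp 0 s
    rw [Equiv.symm_apply_apply]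
  rw [blk, Matrix.reindex_apply, Matrix.submatrix_mulVec_equiv]
  rw [Equiv.symm_symm, h1, Matrix.fromBlocks_mulVec]
  funext w
  show Sum.elim (A *ᵥ u.ofLp + (0 : Matrix (Fin n) (Fin n) ℂ) *ᵥ (0 : Fin n → ℂ))
      ((0 : Matrix (Fin n) (Fin n) ℂ) *ᵥ u.ofLp + B *ᵥ (0 : Fin n → ℂ)) (finSumFinEquiv.symm w)
    = Sum.elim (A *ᵥ u.ofLp) (0 : Fin n → ℂ) (finSumFinEquiv.symm w)
  rcases finSumFinEquiv.symm w with a | a <;> simp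

lemma blk_mulVec₂ (A B : Matrix (Fin n) (Fin n) ℂ) (u : Es n) :
    (blk A 0 0 B) *ᵥ (j2 u).ofLp = (j2 (WithLp.toLp 2 (B *ᵥ u.ofLp))).ofLp := by
  have h1 : (j2 u).ofLp ∘ (finSumFinEquiv (m := n) (n := n)) = Sum.elim (0 : Fin n → ℂ) u.ofLp := by
    funext s
    show Sum.elim (0 : Fin n → ℂ) u.ofLp (finSumFinEquiv.symm (finSumFinEquiv s)) = Sum.elim (0 : Fin n → ℂ) u.ofLp s
    rw [Equiv.symm_apply_apply]
  rw [blk, Matrix.reindex_apply, Matrix.submatrix_mulVec_equiv]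
  rw [Equiv.symm_symm, h1, Matrix.fromBlocks_mulVec]
  funext w
  show Sum.elim (A *ᵥ (0 : Fin n → ℂ) + (0 : Matrix (Fin n) (Fin n) ℂ) *ᵥ u.ofLp)
      ((0 : Matrix (Fin n) (Fin n) ℂ) *ᵥ (0 : Fin n → ℂ) + B *ᵥ u.ofLp) (finSumFinEquiv.symm w)
    = Sum.elim (0 : Fin n → ℂ) (B *ᵥ u.ofLp) (finSumFinEquiv.symm w)
  rcases finSumFinEquiv.symm w with a | a <;> simp

lemma L_j1 (A B : Matrix (Fin n) (Fin n) ℂ) (u : Es n) :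
    L (blk A 0 0 B) (j1 u) = j1 ((Matrix.toEuclideanLin A) u) := by
  have h := blk_mulVec₁ A B u
  ext w
  have := congrFun h w
  simpa [L, Matrix.toEuclideanLin_apply] using this

lemma L_j2 (A B : Matrix (Fin n) (Fin n) ℂ) (u : Es n) :
    L (blk A 0 0 B) (j2 u) = j2 ((Matrix.toEuclideanLin B) u) := by
  have h := blk_mulVec₂ A B u
  ext w
  have := congrFun h w
  simpa [L, Matrix.toEuclideanLin_apply] using this

lemma sv_sqrt_eq {A : Matrix (Fin n) (Fin n) ℂ} (hA : A.PosSemidef) (i : Fin n) :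
    sv (hA.1.cfc Real.sqrt) i = Real.sqrt (dE hA.1 i) := by
  rw [sv_eq]
  congr 1
  apply dE_congr
  calc (hA.1.cfc Real.sqrt)ᴴ * hA.1.cfc Real.sqrt = cfc Real.sqrt A * cfc Real.sqrt A := by
        rw [← hA.1.cfc_eq, ← Matrix.star_eq_conjTranspose, (cfc_predicate Real.sqrt A).star_eq]
  _ = A := by
        rw [← cfc_mul Real.sqrt Real.sqrt A]
        conv_rhs => rw [← cfc_id' ℝ A hA.1.isSelfAdjoint]
        refine cfc_congr (fun x hx => ?_)
        rw [hA.1.spectrum_real_eq_range_eigenvalues] at hx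
        obtain ⟨i, rfl⟩ := hx
        exact Real.mul_self_sqrt (hA.eigenvalues_nonneg i)

lemma block_count {A B : Matrix (Fin n) (Fin n) ℂ} (hA : A.PosSemidef) (hB : B.PosSemidef)
    (j : Fin n) :
    ∃ i k : Fin n, (i:ℕ) + (k:ℕ) = (j:ℕ) ∧
      dE hA.1 i ≤ sv (blk A 0 0 B) (Fin.castAdd n j) ∧
      dE hB.1 k ≤ sv (blk A 0 0 B) (Fin.castAdd n j) := by
  classical
  set t := sv (blk A 0 0 B) (Fin.castAdd n j) with ht
  have ht0 : 0 ≤ t := sv_nonneg' _ _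
  set SA : Finset (Fin n) := univ.filter (fun l => t < hA.1.eigenvalues l) with hSA
  set SB : Finset (Fin n) := univ.filter (fun l => t < hB.1.eigenvalues l) with hSB
  have hcount : SA.card + SB.card ≤ (j:ℕ) := by
    by_contra hc
    push_neg at hc
    set v : {l // l ∈ SA} ⊕ {l // l ∈ SB} → Es (n+n) :=
      Sum.elim (fun l => j1 (hA.1.eigenvectorBasis l.1))
               (fun l => j2 (hB.1.eigenvectorBasis l.1)) with hv
    have hortho : Orthonormal ℂ v := by
      rw [orthonormal_iff_ite]
      rintro (⟨a, ha⟩ | ⟨a, ha⟩) (⟨b, hb⟩ | ⟨b, hb⟩)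
      · simp only [hv, Sum.elim_inl]
        rw [inner_j1_j1]
        rw [orthonormal_iff_ite.mp hA.1.eigenvectorBasis.orthonormal a b]
        by_cases hab : a = b <;> simp [hab, Subtype.ext_iff]
      · simp only [hv, Sum.elim_inl, Sum.elim_inr]
        rw [inner_j1_j2]
        simp
      · simp only [hv, Sum.elim_inl, Sum.elim_inr]
        rw [inner_j2_j1]
        simp
      · simp only [hv, Sum.elim_inr]
        rw [inner_j2_j2]
        rw [orthonormal_iff_ite.mp hB.1.eigenvectorBasis.orthonormal a b]
        by_cases hab : a = b <;> simp [hab, Subtype.ext_iff]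
    set lam : {l // l ∈ SA} ⊕ {l // l ∈ SB} → ℝ :=
      Sum.elim (fun l => hA.1.eigenvalues l.1) (fun l => hB.1.eigenvalues l.1) with hlamdef
    have hev : ∀ w, L (blk A 0 0 B) (v w) = ((lam w : ℝ) : ℂ) • v w := by
      rintro (⟨a, ha⟩ | ⟨a, ha⟩)
      · simp only [hv, hlamdef, Sum.elim_inl]
        rw [L_j1]
        rw [show (Matrix.toEuclideanLin A) (hA.1.eigenvectorBasis a)
              = ((hA.1.eigenvalues a : ℝ) : ℂ) • hA.1.eigenvectorBasis a from L_eigen hA.1 a]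
        rw [j1_smul]
      · simp only [hv, hlamdef, Sum.elim_inr]
        rw [L_j2]
        rw [show (Matrix.toEuclideanLin B) (hB.1.eigenvectorBasis a)
              = ((hB.1.eigenvalues a : ℝ) : ℂ) • hB.1.eigenvectorBasis a from L_eigen hB.1 a]
        rw [j2_smul]
    have hlam : ∀ w, t < lam w := by
      rintro (⟨a, ha⟩ | ⟨a, ha⟩)
      · simp only [hSA, mem_filter, mem_univ, true_and] at ha
        simpa [hlamdef] using ha
      · simp only [hSB, mem_filter, mem_univ, true_and] at ha
        simpa [hlamdef] using ha
    have hstrict : ∀ x ∈ Submodule.span ℂ (Set.range v), x ≠ 0 →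
        sv (blk A 0 0 B) (Fin.castAdd n j) * ‖x‖ < ‖L (blk A 0 0 B) x‖ := by
      intro x hx hx0
      rw [← ht]
      exact lt_norm_L_of_mem_span hortho hev ht0 hlam hx hx0
    have hle := finrank_le_of_sv_lt (blk A 0 0 B) (Fin.castAdd n j) _ hstrict
    rw [finrank_span_eq_card hortho.linearIndependent] at hle
    simp only [Fintype.card_sum, Fintype.card_coe, Fin.coe_castAdd] at hle
    omega
  have hiA : SA.card ≤ (j:ℕ) := le_trans (Nat.le_add_right _ _) hcount
  have hjn : (j:ℕ) < n := j.2
  refine ⟨⟨SA.card, lt_of_le_of_lt hiA hjn⟩,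
    ⟨(j:ℕ) - SA.card, lt_of_le_of_lt (Nat.sub_le _ _) hjn⟩,
    by simp only [Fin.val_mk]; omega, ?_, ?_⟩
  · apply antitone_le_of_card (dE_antitone hA.1)
    rw [card_filter_dE hA.1 (fun r => t < r), ← hSA]
  · apply antitone_le_of_card (dE_antitone hB.1)
    rw [card_filter_dE hB.1 (fun r => t < r), ← hSB]
    simp only [Fin.val_mk]
    omega

end Block

end SVAux
theorem sv_sqrt_product_opNorm {n : ℕ} {A B : Matrix (Fin n) (Fin n) ℂ}
    (X : Matrix (Fin n) (Fin n) ℂ) (hA : A.PosSemidef) (hB : B.PosSemidef) :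
    ∀ j : Fin n, sv (hA.1.cfc Real.sqrt * X * hB.1.cfc Real.sqrt) j ≤
      opNorm X * sv (blk A 0 0 B) (Fin.castAdd n j) := by
  intro j
  have hn : 0 < n := j.pos
  obtain ⟨i, k, hik, hiA, hkB⟩ := SVAux.block_count hA hB j
  have horn := SVAux.horn3 (hA.1.cfc Real.sqrt) X (hB.1.cfc Real.sqrt) i k j hik (opNorm X)
    (SVAux.opNorm_nonneg X hn) (SVAux.L_le_opNorm X hn)
  refine horn.trans ?_
  rw [SVAux.sv_sqrt_eq hA i, SVAux.sv_sqrt_eq hB k]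
  set t := sv (blk A 0 0 B) (Fin.castAdd n j) with ht
  have ht0 : 0 ≤ t := SVAux.sv_nonneg' _ _
  have hC0 : 0 ≤ opNorm X := SVAux.opNorm_nonneg X hn
  have h1 : Real.sqrt (SVAux.dE hA.1 i) ≤ Real.sqrt t := Real.sqrt_le_sqrt hiA
  have h2 : Real.sqrt (SVAux.dE hB.1 k) ≤ Real.sqrt t := Real.sqrt_le_sqrt hkB
  calc Real.sqrt (SVAux.dE hA.1 i) * opNorm X * Real.sqrt (SVAux.dE hB.1 k)
      ≤ Real.sqrt t * opNorm X * Real.sqrt t := by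
        apply mul_le_mul _ h2 (Real.sqrt_nonneg _)
        · positivity
        · exact mul_le_mul_of_nonneg_right h1 hC0
    _ = opNorm X * (Real.sqrt t * Real.sqrt t) := by ring
    _ = opNorm X * t := by rw [Real.mul_self_sqrt ht0]
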